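/- Let p(z) = Π_{j=1}^n (z - w_j)^{μ_j} of degree N with distinct roots. Define R_0^{(p)} on polynomials by (R_0^{(p)} f)(z) = (f(z) - Z(z) V^{-1} C_w f)/p(z) (the division is exact). If f(z) = Z(z) F(p(z)) then (R_0^{(p)} f)(z) = Z(z)(R_0 F)(p(z)), where (R_0 F)(z) = (F(z) - F(0))/z is the backward shift applied entrywise. -/

import Mathlib

open Polynomial

/-- If all derivatives of order `< μ` of `q` vanish at `a`, then `(X - a)^μ ∣ q`. -/
lemma pow_dvd_of_derivs (q : ℂ[X]) (a : ℂ) (μ : ℕ)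
    (h : ∀ m < μ, (Polynomial.derivative^[m] q).eval a = 0) :
    (X - C a) ^ μ ∣ q := by
  rcases eq_or_ne q 0 with rfl | hq
  · exact dvd_zero _
  rcases Nat.eq_zero_or_pos μ with rfl | hμ
  · simp
  have hlt : μ - 1 < q.rootMultiplicity a := by
    apply Polynomial.lt_rootMultiplicity_of_isRoot_iterate_derivative_of_mem_nonZeroDivisors hq
    · intro m hm
      exact h m (by omega)
    · exact mem_nonZeroDivisors_of_ne_zero (by exact_mod_cast Nat.factorial_ne_zero (μ - 1))
  have : μ ≤ q.rootMultiplicity a := by omega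
  exact dvd_trans (pow_dvd_pow _ this) (q.pow_rootMultiplicity_dvd a)

/-- If `(X - a)^μ ∣ s` and `m < μ` then the `m`-th derivative of `s` vanishes at `a`. -/
lemma deriv_eval_zero_of_pow_dvd (s : ℂ[X]) (a : ℂ) (μ m : ℕ) (hm : m < μ)
    (hdvd : (X - C a) ^ μ ∣ s) : (Polynomial.derivative^[m] s).eval a = 0 := by
  rcases eq_or_ne s 0 with rfl | hs
  · simp
  have : μ ≤ s.rootMultiplicity a := (Polynomial.le_rootMultiplicity_iff hs).mpr hdvd
  exact Polynomial.isRoot_iterate_derivative_of_lt_rootMultiplicity (lt_of_lt_of_le hm this)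

lemma iterate_derivative_add' (a b : ℂ[X]) (m : ℕ) :
    Polynomial.derivative^[m] (a + b)
      = Polynomial.derivative^[m] a + Polynomial.derivative^[m] b := by
  induction m with
  | zero => simp
  | succ m ih => simp [Function.iterate_succ_apply', ih]

/-- The operator `R_0^{(p)} f = (f - Z V⁻¹ C_w f)/p` (exact division) intertwines with the
entrywise backward shift `R_0 F = (F(z) - F(0))/z`: if `f(z) = Z(z)F(p(z))` then
`(R_0^{(p)} f)(z) = Z(z)(R_0 F)(p(z))`, i.e.
`f - Z V⁻¹ C_w f = p · ∑_k z^k (R_0 F)_k(p(z))`. -/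
theorem R0p_intertwines (n N : ℕ) (w : Fin n → ℂ) (hw : Function.Injective w)
    (μ : Fin n → ℕ) (hμ : ∀ j, 1 ≤ μ j) (hN : ∑ j, μ j = N)
    (p : ℂ[X]) (hp : p = ∏ j, (X - C (w j)) ^ μ j)
    (e : ((j : Fin n) × Fin (μ j)) ≃ Fin N)
    (V : Matrix ((j : Fin n) × Fin (μ j)) ((j : Fin n) × Fin (μ j)) ℂ)
    (hV : ∀ jk c, V jk c =
      (Polynomial.derivative^[(jk.2 : ℕ)] (X ^ ((e c : Fin N) : ℕ) : ℂ[X])).eval (w jk.1))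
    (f : ℂ[X]) (F : Fin N → ℂ[X])
    (hF : f = ∑ k : Fin N, X ^ (k : ℕ) * (F k).comp p)
    (Cw : ((j : Fin n) × Fin (μ j)) → ℂ)
    (hCw : ∀ jk, Cw jk = (Polynomial.derivative^[(jk.2 : ℕ)] f).eval (w jk.1)) :
    f - ∑ i : Fin N, C (V⁻¹.mulVec Cw (e.symm i)) * X ^ (i : ℕ)
      = p * ∑ k : Fin N, X ^ (k : ℕ) * ((F k).divX.comp p) := by
  -- p is monic of degree N
  have hpmonic : p.Monic := by
    rw [hp]; exact monic_prod_of_monic _ _ fun j _ => (monic_X_sub_C _).pow _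
  have hpdeg : p.natDegree = N := by
    rw [hp, Polynomial.natDegree_prod _ _ (fun j _ => pow_ne_zero _ (X_sub_C_ne_zero _))]
    simp [Polynomial.natDegree_pow, hN]
  -- pairwise coprime factors
  have hcop : Pairwise (Function.onFun IsCoprime fun j => (X - C (w j)) ^ μ j) := by
    intro i j hij
    exact ((Polynomial.pairwise_coprime_X_sub_C hw hij)).pow
  -- key divisibility: each factor divides p
  have hfac : ∀ j, (X - C (w j)) ^ μ j ∣ p := by
    intro j; rw [hp]; exact Finset.dvd_prod_of_mem _ (Finset.mem_univ j)
  -- V is invertible : mulVec injective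
  have hVinj : Function.Injective V.mulVec := by
    rw [← Matrix.coe_mulVecLin, ← LinearMap.ker_eq_bot, LinearMap.ker_eq_bot']
    intro a ha
    replace ha : ∀ jk, V.mulVec a jk = 0 := fun jk => congrFun (by exact ha) jk
    set q : ℂ[X] := ∑ i : Fin N, C (a (e.symm i)) * X ^ (i : ℕ) with hq
    have hderiv : ∀ jk : (j : Fin n) × Fin (μ j),
        (Polynomial.derivative^[(jk.2 : ℕ)] q).eval (w jk.1) = 0 := by
      intro jk
      have := ha jk
      simp only [Matrix.mulVec, dotProduct] at this
      rw [hq]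
      simp only [Polynomial.iterate_derivative_sum, Polynomial.eval_finset_sum]
      rw [← Equiv.sum_comp e (fun i => (Polynomial.derivative^[(jk.2 : ℕ)]
        (C (a (e.symm i)) * X ^ (i : ℕ))).eval (w jk.1))]
      calc ∑ c, (Polynomial.derivative^[(jk.2 : ℕ)]
              (C (a (e.symm (e c))) * X ^ ((e c : Fin N) : ℕ))).eval (w jk.1)
          = ∑ c, V jk c * a c := by
            refine Finset.sum_congr rfl fun c _ => ?_
            rw [Polynomial.iterate_derivative_C_mul, Polynomial.eval_mul, Polynomial.eval_C,
              Equiv.symm_apply_apply, hV jk c, mul_comm]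
        _ = 0 := this
    have hdvd : p ∣ q := by
      rw [hp]
      apply Fintype.prod_dvd_of_coprime hcop
      intro j
      apply pow_dvd_of_derivs
      intro m hm
      exact hderiv ⟨j, ⟨m, hm⟩⟩
    have hq0 : q = 0 := by
      apply Polynomial.eq_zero_of_dvd_of_degree_lt hdvd
      calc q.degree < (N : WithBot ℕ) := Polynomial.degree_sum_fin_lt _
        _ = p.degree := by rw [Polynomial.degree_eq_natDegree hpmonic.ne_zero, hpdeg]
    funext c
    show a c = (0 : ((j : Fin n) × Fin (μ j)) → ℂ) c
    have hc : ∀ i : Fin N, a (e.symm i) = 0 := by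
      intro i
      have := congrArg (fun r => Polynomial.coeff r (i : ℕ)) hq0
      simp only [hq, Polynomial.finset_sum_coeff, Polynomial.coeff_C_mul,
        Polynomial.coeff_X_pow, Polynomial.coeff_zero, mul_ite, mul_one, mul_zero] at this
      rwa [Finset.sum_eq_single i (fun b _ hb => by
          simp [Fin.val_eq_val, Ne.symm hb]) (fun h => absurd (Finset.mem_univ i) h),
        if_pos rfl] at this
    have := hc (e c)
    rwa [Equiv.symm_apply_apply] at this
  have hVunit : IsUnit V := Matrix.mulVec_injective_iff_isUnit.mp hVinj
  -- split f as r + p * h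
  set g : ((j : Fin n) × Fin (μ j)) → ℂ := fun c => (F (e c)).coeff 0 with hg
  set r : ℂ[X] := ∑ k : Fin N, C ((F k).coeff 0) * X ^ (k : ℕ) with hr
  set h : ℂ[X] := ∑ k : Fin N, X ^ (k : ℕ) * ((F k).divX.comp p) with hh
  have hsplit : f = r + p * h := by
    rw [hF, hr, hh, Finset.mul_sum, ← Finset.sum_add_distrib]
    refine Finset.sum_congr rfl fun k _ => ?_
    conv_lhs => rw [← (F k).divX_mul_X_add]
    rw [Polynomial.add_comp, Polynomial.mul_comp, Polynomial.C_comp, Polynomial.X_comp]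
    ring
  -- Cw = V.mulVec g
  have hCwV : Cw = V.mulVec g := by
    funext jk
    rw [hCw jk, Matrix.mulVec, dotProduct, hsplit]
    have h2 : (Polynomial.derivative^[(jk.2 : ℕ)] (p * h)).eval (w jk.1) = 0 :=
      deriv_eval_zero_of_pow_dvd _ _ (μ jk.1) _ jk.2.isLt
        (dvd_trans (hfac jk.1) (dvd_mul_right p h))
    rw [iterate_derivative_add', Polynomial.eval_add, h2, add_zero, hr]
    simp only [Polynomial.iterate_derivative_sum, Polynomial.eval_finset_sum]
    rw [← Equiv.sum_comp e (fun k => (Polynomial.derivative^[(jk.2 : ℕ)]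
      (C ((F k).coeff 0) * X ^ (k : ℕ))).eval (w jk.1))]
    refine Finset.sum_congr rfl fun c _ => ?_
    rw [Polynomial.iterate_derivative_C_mul, Polynomial.eval_mul, Polynomial.eval_C,
      hV jk c, hg, mul_comm]
  -- hence V⁻¹.mulVec Cw = g
  have hsolve : V⁻¹.mulVec Cw = g := by
    rw [hCwV, Matrix.mulVec_mulVec, Matrix.nonsing_inv_mul V
      ((Matrix.isUnit_iff_isUnit_det V).mp hVunit), Matrix.one_mulVec]
  rw [hsolve, hsplit]
  have : ∑ i : Fin N, C (g (e.symm i)) * X ^ (i : ℕ) = r := by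
    rw [hr]
    refine Finset.sum_congr rfl fun i _ => ?_
    rw [hg]
    simp [Equiv.apply_symm_apply]
  rw [this, hh]
  ring
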